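/- Let g≥1 and let τ be a symmetric g×g complex matrix whose imaginary part is positive definite. Let e, e' ∈ ℤ^g be integer vectors with e·e' odd, and set c := (1/2)e + (1/2)τ(e') ∈ ℂ^g (an odd half-integer characteristic). Then θ(c | τ) = 0, where θ := ϑ_{0,0}. -/
import Mathlib


open scoped Matrix

/-- The theta function with characteristics `μ, ν` associated to a `g × g` matrix `τ`:
`ϑ_{μ,ν}(z|τ) = Σ_{n ∈ ℤ^g} exp(iπ (n+μ)·τ(n+μ) + 2iπ (n+μ)·(z+ν))`. -/
noncomputable def thetaChar (g : ℕ) (μ ν : Fin g → ℝ) (τ : Matrix (Fin g) (Fin g) ℂ)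
    (z : Fin g → ℂ) : ℂ :=
  ∑' n : Fin g → ℤ,
    Complex.exp ((Real.pi : ℂ) * Complex.I *
        (∑ i, ((n i : ℂ) + (μ i : ℂ)) * (τ.mulVec (fun j => (n j : ℂ) + (μ j : ℂ))) i)
      + 2 * (Real.pi : ℂ) * Complex.I * ∑ i, ((n i : ℂ) + (μ i : ℂ)) * (z i + (ν i : ℂ)))


open Complex Matrix Finset in
/-- The Riemann theta function `θ = ϑ_{0,0}` vanishes at any odd half-integer characteristic
`c = (1/2)e + (1/2)τ(e')` with `e, e' ∈ ℤ^g` and `e·e'` odd. -/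
theorem theta_vanishes_at_odd_half_integer_characteristic (g : ℕ) (hg : 1 ≤ g)
    (τ : Matrix (Fin g) (Fin g) ℂ) (hτ : τ.IsSymm)
    (hτim : (τ.map Complex.im).PosDef)
    (e e' : Fin g → ℤ) (hodd : Odd (∑ i, e i * e' i)) :
    thetaChar g 0 0 τ
      (fun i => (e i : ℂ) / 2 + (1 / 2 : ℂ) * (τ.mulVec (fun j => (e' j : ℂ))) i) = 0 := by
  classical
  have hsym : ∀ x y : Fin g → ℂ, x ⬝ᵥ τ *ᵥ y = y ⬝ᵥ τ *ᵥ x := fun x y => by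
    rw [Matrix.dotProduct_mulVec, ← Matrix.mulVec_transpose, hτ.eq, dotProduct_comm]
  set E : Fin g → ℂ := fun i => (e i : ℂ) with hE
  set E' : Fin g → ℂ := fun i => (e' i : ℂ) with hE'
  set c : Fin g → ℂ := fun i => E i / 2 + (1 / 2 : ℂ) * (τ *ᵥ E') i with hc
  set ι : (Fin g → ℤ) → (Fin g → ℂ) := fun n i => (n i : ℂ) with hι
  set P : (Fin g → ℤ) → ℂ := fun n =>
    (Real.pi : ℂ) * Complex.I * (ι n ⬝ᵥ τ *ᵥ ι n)
      + 2 * (Real.pi : ℂ) * Complex.I * (ι n ⬝ᵥ c) with hP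
  have hθ : thetaChar g 0 0 τ c = ∑' n : Fin g → ℤ, Complex.exp (P n) := by
    unfold thetaChar
    refine tsum_congr fun n => ?_
    simp only [Pi.zero_apply, Complex.ofReal_zero, add_zero, hP, hι, dotProduct]
  -- the involution n ↦ -n - e'
  have hinv : Function.Involutive (fun n : Fin g → ℤ => -n - e') := fun n => by
    funext i
    show -(-n i - e' i) - e' i = n i
    ring
  set φ : (Fin g → ℤ) ≃ (Fin g → ℤ) := hinv.toPerm _ with hφ
  -- dot product with c
  have hcd : ∀ x : Fin g → ℂ, x ⬝ᵥ c = (x ⬝ᵥ E) / 2 + (x ⬝ᵥ (τ *ᵥ E')) / 2 := by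
    intro x
    simp only [hc, dotProduct, mul_add, Finset.sum_add_distrib, Finset.sum_div]
    congr 1
    · exact Finset.sum_congr rfl fun i _ => by ring
    · exact Finset.sum_congr rfl fun i _ => by ring
  -- key pointwise identity
  have key : ∀ n : Fin g → ℤ, Complex.exp (P (φ n)) = - Complex.exp (P n) := by
    intro n
    have hιφ : ι (φ n) = fun i => -(ι n i) - E' i := by
      funext i
      show ((((-n - e') : Fin g → ℤ) i : ℂ)) = -(n i : ℂ) - (e' i : ℂ)
      simp only [Pi.sub_apply, Pi.neg_apply]
      push_cast
      ring
    have hPφ : P (φ n) = P n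
        - 2 * (Real.pi : ℂ) * Complex.I * (ι n ⬝ᵥ E)
        - (Real.pi : ℂ) * Complex.I * (E' ⬝ᵥ E) := by
      have h1 : ι (φ n) = -(ι n) - E' := by funext i; rw [hιφ]; simp
      simp only [hP, h1, Matrix.mulVec_sub, Matrix.mulVec_neg, sub_dotProduct,
        neg_dotProduct, dotProduct_sub, dotProduct_neg, hcd]
      rw [hsym E' (ι n)]
      ring
    rw [hPφ]
    have hp : ι n ⬝ᵥ E = ((∑ i, n i * e i : ℤ) : ℂ) := by
      simp [dotProduct, hι, hE]
    have hq : E' ⬝ᵥ E = ((∑ i, e i * e' i : ℤ) : ℂ) := by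
      simp only [dotProduct, hE, hE']
      push_cast
      exact Finset.sum_congr rfl fun i _ => by ring
    obtain ⟨m, hm⟩ := hodd
    rw [Complex.exp_sub, Complex.exp_sub, hp, hq, hm]
    have h2 : Complex.exp (2 * (Real.pi : ℂ) * Complex.I * ((∑ i, n i * e i : ℤ) : ℂ)) = 1 := by
      rw [show 2 * (Real.pi : ℂ) * Complex.I * ((∑ i, n i * e i : ℤ) : ℂ)
          = ((∑ i, n i * e i : ℤ) : ℂ) * (2 * Real.pi * Complex.I) by ring]
      exact Complex.exp_int_mul_two_pi_mul_I _
    have h3 : Complex.exp ((Real.pi : ℂ) * Complex.I * ((2 * m + 1 : ℤ) : ℂ)) = -1 := by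
      push_cast
      rw [show (Real.pi : ℂ) * Complex.I * (2 * (m : ℂ) + 1)
          = (m : ℂ) * (2 * Real.pi * Complex.I) + Real.pi * Complex.I by ring,
        Complex.exp_add, Complex.exp_int_mul_two_pi_mul_I, Complex.exp_pi_mul_I]
      ring
    rw [h2, h3]
    field_simp
  have h1 : ∑' n, Complex.exp (P (φ n)) = ∑' n, Complex.exp (P n) := φ.tsum_eq (fun n => Complex.exp (P n))
  have h2 : ∑' n, Complex.exp (P (φ n)) = - ∑' n, Complex.exp (P n) := by
    rw [tsum_congr key, tsum_neg]
  rw [hθ]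
  have := h1.symm.trans h2
  linear_combination this / 2
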